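/- Let φ : R → Q be an injective ring epimorphism with Tor_1^R(Q, Q) = 0, and set K = Q/φ(R). Then K ⊗_R Q = 0 and Tor_1^R(K, Q) = 0. -/

import Mathlib

open MulOpposite

universe u

/-- `φ : R →+* Q` is an epimorphism in the category of rings. -/
def IsRingEpi {R Q : Type u} [Ring R] [Ring Q] (φ : R →+* Q) : Prop :=
  ∀ (T : Type u) [Ring T] (ψ ω : Q →+* T), ψ.comp φ = ω.comp φ → ψ = ω

section NCTensor

variable (R : Type u) [Ring R] (M : Type u) [AddCommGroup M] [Module Rᵐᵒᵖ M]
  (N : Type u) [AddCommGroup N] [Module R N]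

/-- Relations defining the tensor product `M ⊗_R N` of a right `R`-module `M`
and a left `R`-module `N` over a (possibly noncommutative) ring `R`. -/
def ncRels : AddSubgroup (FreeAbelianGroup (M × N)) :=
  AddSubgroup.closure
    ({x | ∃ m m' n, x = FreeAbelianGroup.of (m + m', n) - FreeAbelianGroup.of (m, n) -
        FreeAbelianGroup.of (m', n)} ∪
     {x | ∃ m n n', x = FreeAbelianGroup.of (m, n + n') - FreeAbelianGroup.of (m, n) -
        FreeAbelianGroup.of (m, n')} ∪
     {x | ∃ (r : R) (m : M) (n : N), x = FreeAbelianGroup.of (op r • m, n) -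
        FreeAbelianGroup.of (m, r • n)})

/-- The tensor product `M ⊗_R N` of a right `R`-module and a left `R`-module over a
(possibly noncommutative) ring `R`, as an abelian group. -/
def NCTensor : Type u := FreeAbelianGroup (M × N) ⧸ ncRels R M N

instance : AddCommGroup (NCTensor R M N) :=
  QuotientAddGroup.Quotient.addCommGroup _

/-- The pure tensor `m ⊗ n` in `M ⊗_R N`. -/
def NCTensor.tmul (m : M) (n : N) : NCTensor R M N :=
  QuotientAddGroup.mk (FreeAbelianGroup.of (m, n))

end NCTensor

/-- `Tor_1^R(X, N) = 0`, for a right `R`-module `X` and a left `R`-module `N`: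
for every presentation `0 → A → B → X → 0` of `X` with `B` projective, the induced map
`A ⊗_R N → B ⊗_R N` is injective. -/
def Tor1Zero (R : Type u) [Ring R] (X : Type u) [AddCommGroup X] [Module Rᵐᵒᵖ X]
    (N : Type u) [AddCommGroup N] [Module R N] : Prop :=
  ∀ (A B : Type u) [AddCommGroup A] [AddCommGroup B] [Module Rᵐᵒᵖ A] [Module Rᵐᵒᵖ B]
    (i : A →ₗ[Rᵐᵒᵖ] B) (p : B →ₗ[Rᵐᵒᵖ] X),
    Module.Projective Rᵐᵒᵖ B → Function.Injective i → Function.Surjective p →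
    LinearMap.range i = LinearMap.ker p →
    ∀ g : NCTensor R A N →+ NCTensor R B N,
      (∀ a n, g (NCTensor.tmul R A N a n) = NCTensor.tmul R B N (i a) n) →
      Function.Injective g

section Kmod

variable {R Q : Type u} [Ring R] [Ring Q] (φ : R →+* Q) [Module Rᵐᵒᵖ Q]
  (hr : ∀ (r : R) (q : Q), op r • q = q * φ r)

/-- The image of `φ`, as a submodule of the right `R`-module `Q`. -/
def phiRange : Submodule Rᵐᵒᵖ Q where
  carrier := Set.range φ
  add_mem' := by rintro x y ⟨a, rfl⟩ ⟨b, rfl⟩; exact ⟨a + b, map_add φ a b⟩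
  zero_mem' := ⟨0, map_zero φ⟩
  smul_mem' := by
    rintro c x ⟨a, rfl⟩
    refine ⟨a * c.unop, ?_⟩
    rw [map_mul]
    conv_rhs => rw [← MulOpposite.op_unop c, hr]

/-- `K = Q/φ(R)` as a right `R`-module. -/
abbrev Kmod := Q ⧸ phiRange φ hr

end Kmod


section NCAPI

variable {R : Type u} [Ring R] {M : Type u} [AddCommGroup M] [Module Rᵐᵒᵖ M]
  {N : Type u} [AddCommGroup N] [Module R N]

namespace NCTensor

variable {R : Type u} [Ring R] {M : Type u} [AddCommGroup M] [Module Rᵐᵒᵖ M]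
  {N : Type u} [AddCommGroup N] [Module R N]

def lift {T : Type u} [AddCommGroup T] (f : M → N → T)
    (h1 : ∀ m m' n, f (m + m') n = f m n + f m' n)
    (h2 : ∀ m n n', f m (n + n') = f m n + f m n')
    (h3 : ∀ (r : R) m n, f (op r • m) n = f m (r • n)) :
    NCTensor R M N →+ T :=
  QuotientAddGroup.lift (ncRels R M N) (FreeAbelianGroup.lift fun p : M × N => f p.1 p.2) (by
    rw [ncRels, AddSubgroup.closure_le]
    rintro x ((⟨m, m', n, rfl⟩ | ⟨m, n, n', rfl⟩) | ⟨r, m, n, rfl⟩) <;>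
      · simp only [SetLike.mem_coe, AddMonoidHom.mem_ker, map_sub, FreeAbelianGroup.lift_apply_of,
          h1, h2, h3]
        abel)

@[simp] theorem lift_tmul {T : Type u} [AddCommGroup T] (f : M → N → T) (h1 h2 h3) (m : M) (n : N) :
    lift f h1 h2 h3 (tmul R M N m n) = f m n := by
  show QuotientAddGroup.lift _ _ _ (QuotientAddGroup.mk _) = _
  rw [QuotientAddGroup.lift_mk, FreeAbelianGroup.lift_apply_of]

theorem hom_ext {T : Type u} [AddCommGroup T] {f g : NCTensor R M N →+ T}
    (h : ∀ m n, f (tmul R M N m n) = g (tmul R M N m n)) : f = g := by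
  have key : f.comp (QuotientAddGroup.mk' (ncRels R M N)) =
      g.comp (QuotientAddGroup.mk' (ncRels R M N)) :=
    FreeAbelianGroup.lift_ext _ _ fun p => h p.1 p.2
  ext x
  obtain ⟨y, rfl⟩ := QuotientAddGroup.mk'_surjective (ncRels R M N) x
  exact DFunLike.congr_fun key y

theorem add_tmul (m m' : M) (n : N) :
    tmul R M N (m + m') n = tmul R M N m n + tmul R M N m' n := by
  have h : FreeAbelianGroup.of ((m + m', n) : M × N) - FreeAbelianGroup.of ((m, n) : M × N) -
      FreeAbelianGroup.of ((m', n) : M × N) ∈ ncRels R M N :=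
    AddSubgroup.subset_closure (by left; left; exact ⟨m, m', n, rfl⟩)
  have h2 := (QuotientAddGroup.eq_zero_iff _).2 h
  rw [QuotientAddGroup.mk_sub, QuotientAddGroup.mk_sub, sub_sub, sub_eq_zero] at h2
  exact h2

theorem tmul_add (m : M) (n n' : N) :
    tmul R M N m (n + n') = tmul R M N m n + tmul R M N m n' := by
  have h : FreeAbelianGroup.of ((m, n + n') : M × N) - FreeAbelianGroup.of ((m, n) : M × N) -
      FreeAbelianGroup.of ((m, n') : M × N) ∈ ncRels R M N :=
    AddSubgroup.subset_closure (by left; right; exact ⟨m, n, n', rfl⟩)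
  have h2 := (QuotientAddGroup.eq_zero_iff _).2 h
  rw [QuotientAddGroup.mk_sub, QuotientAddGroup.mk_sub, sub_sub, sub_eq_zero] at h2
  exact h2

theorem smul_tmul (r : R) (m : M) (n : N) :
    tmul R M N (op r • m) n = tmul R M N m (r • n) := by
  have h : FreeAbelianGroup.of ((op r • m, n) : M × N) -
      FreeAbelianGroup.of ((m, r • n) : M × N) ∈ ncRels R M N :=
    AddSubgroup.subset_closure (by right; exact ⟨r, m, n, rfl⟩)
  have h2 := (QuotientAddGroup.eq_zero_iff _).2 h
  rw [QuotientAddGroup.mk_sub, sub_eq_zero] at h2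
  exact h2

theorem zero_tmul (n : N) : tmul R M N 0 n = 0 := by
  have := add_tmul (R := R) (0 : M) 0 n
  rw [add_zero] at this
  exact left_eq_add.mp this

theorem tmul_zero (m : M) : tmul R M N m 0 = 0 := by
  have := tmul_add (R := R) m (0 : N) 0
  rw [add_zero] at this
  exact left_eq_add.mp this

def map₁ {M' : Type u} [AddCommGroup M'] [Module Rᵐᵒᵖ M'] (f : M' →ₗ[Rᵐᵒᵖ] M) :
    NCTensor R M' N →+ NCTensor R M N :=
  lift (fun a n => tmul R M N (f a) n)
    (fun m m' n => by show tmul R M N (f (m + m')) n = _; rw [map_add, add_tmul])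
    (fun m n n' => by show tmul R M N (f m) (n + n') = _; rw [tmul_add])
    (fun r m n => by show tmul R M N (f (op r • m)) n = _; rw [map_smul, smul_tmul])

@[simp] theorem map₁_tmul {M' : Type u} [AddCommGroup M'] [Module Rᵐᵒᵖ M'] (f : M' →ₗ[Rᵐᵒᵖ] M)
    (m : M') (n : N) : map₁ f (tmul R M' N m n) = tmul R M N (f m) n :=
  lift_tmul _ _ _ _ _ _

end NCTensor

end NCAPI

section Epi

variable {R Q : Type u} [Ring R] [Ring Q] (φ : R →+* Q) [Module Rᵐᵒᵖ Q] [Module R Q]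

def lsmulHom (hr : ∀ (r : R) (q : Q), op r • q = q * φ r) (q : Q) :
    NCTensor R Q Q →+ NCTensor R Q Q :=
  NCTensor.lift (fun x y => NCTensor.tmul R Q Q (q * x) y)
    (fun m m' n => by show NCTensor.tmul R Q Q (q * (m + m')) n = _
                      rw [mul_add, NCTensor.add_tmul])
    (fun m n n' => by show NCTensor.tmul R Q Q (q * m) (n + n') = _; rw [NCTensor.tmul_add])
    (fun r m n => by show NCTensor.tmul R Q Q (q * (op r • m)) n = _
                     rw [hr, ← mul_assoc, ← hr, NCTensor.smul_tmul])

def rsmulHom (hl : ∀ (r : R) (q : Q), r • q = φ r * q) (q : Q) :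
    NCTensor R Q Q →+ NCTensor R Q Q :=
  NCTensor.lift (fun x y => NCTensor.tmul R Q Q x (y * q))
    (fun m m' n => by show NCTensor.tmul R Q Q (m + m') (n * q) = _; rw [NCTensor.add_tmul])
    (fun m n n' => by show NCTensor.tmul R Q Q m ((n + n') * q) = _
                      rw [add_mul, NCTensor.tmul_add])
    (fun r m n => by show NCTensor.tmul R Q Q (op r • m) (n * q) = _
                     rw [NCTensor.smul_tmul, hl, ← mul_assoc, ← hl])

theorem key_comm (hr : ∀ (r : R) (q : Q), op r • q = q * φ r)
    (hl : ∀ (r : R) (q : Q), r • q = φ r * q) (hepi : IsRingEpi φ) (q : Q) :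
    NCTensor.tmul R Q Q 1 q = NCTensor.tmul R Q Q q 1 := by
  letI modL : Module Q (NCTensor R Q Q) :=
    { smul := fun a x => lsmulHom φ hr a x
      one_smul := fun x => by
        have h : lsmulHom φ hr 1 = AddMonoidHom.id _ :=
          NCTensor.hom_ext (fun m n => by simp [lsmulHom])
        exact DFunLike.congr_fun h x
      mul_smul := fun a b x => by
        have h : lsmulHom φ hr (a * b) = (lsmulHom φ hr a).comp (lsmulHom φ hr b) :=
          NCTensor.hom_ext (fun m n => by simp [lsmulHom, mul_assoc])
        exact DFunLike.congr_fun h x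
      smul_zero := fun a => map_zero _
      smul_add := fun a x y => map_add _ x y
      add_smul := fun a b x => by
        have h : lsmulHom φ hr (a + b) = lsmulHom φ hr a + lsmulHom φ hr b :=
          NCTensor.hom_ext (fun m n => by
            simp [lsmulHom, add_mul, NCTensor.add_tmul])
        exact DFunLike.congr_fun h x
      zero_smul := fun x => by
        have h : lsmulHom φ hr 0 = 0 :=
          NCTensor.hom_ext (fun m n => by simp [lsmulHom, NCTensor.zero_tmul])
        exact DFunLike.congr_fun h x }
  letI modR : Module Qᵐᵒᵖ (NCTensor R Q Q) :=
    { smul := fun a x => rsmulHom φ hl a.unop x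
      one_smul := fun x => by
        have h : rsmulHom φ hl 1 = AddMonoidHom.id _ :=
          NCTensor.hom_ext (fun m n => by simp [rsmulHom])
        exact DFunLike.congr_fun h x
      mul_smul := fun a b x => by
        have h : rsmulHom φ hl (b.unop * a.unop) =
            (rsmulHom φ hl a.unop).comp (rsmulHom φ hl b.unop) :=
          NCTensor.hom_ext (fun m n => by simp [rsmulHom, mul_assoc])
        exact DFunLike.congr_fun h x
      smul_zero := fun a => map_zero _
      smul_add := fun a x y => map_add _ x y
      add_smul := fun a b x => by
        have h : rsmulHom φ hl (a + b).unop = rsmulHom φ hl a.unop + rsmulHom φ hl b.unop :=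
          NCTensor.hom_ext (fun m n => by
            simp [rsmulHom, mul_add, NCTensor.tmul_add])
        exact DFunLike.congr_fun h x
      zero_smul := fun x => by
        have h : rsmulHom φ hl (0 : Qᵐᵒᵖ).unop = 0 :=
          NCTensor.hom_ext (fun m n => by simp [rsmulHom, NCTensor.tmul_zero])
        exact DFunLike.congr_fun h x }
  haveI : SMulCommClass Q Qᵐᵒᵖ (NCTensor R Q Q) := by
    constructor
    intro a c x
    have h : (lsmulHom φ hr a).comp (rsmulHom φ hl c.unop) =
        (rsmulHom φ hl c.unop).comp (lsmulHom φ hr a) :=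
      NCTensor.hom_ext (fun m n => by simp [lsmulHom, rsmulHom])
    exact DFunLike.congr_fun h x
  set d : Q → NCTensor R Q Q := fun q => NCTensor.tmul R Q Q 1 q - NCTensor.tmul R Q Q q 1
    with hd
  let ω : Q →+* TrivSqZeroExt Q (NCTensor R Q Q) :=
    { toFun := fun a => ⟨a, d a⟩
      map_one' := by refine TrivSqZeroExt.ext rfl ?_; simp [hd, NCTensor.tmul_zero, NCTensor.zero_tmul]
      map_mul' := fun a b => by
        refine TrivSqZeroExt.ext rfl ?_
        show d (a * b) = a • d b + op b • d a
        show d (a * b) = lsmulHom φ hr a (d b) + rsmulHom φ hl b (d a)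
        simp only [hd, map_sub, lsmulHom, rsmulHom, NCTensor.lift_tmul, mul_one, one_mul]
        abel
      map_zero' := by refine TrivSqZeroExt.ext rfl ?_; simp [hd, NCTensor.tmul_zero, NCTensor.zero_tmul]
      map_add' := fun a b => by
        refine TrivSqZeroExt.ext rfl ?_
        show d (a + b) = d a + d b
        simp only [hd, NCTensor.add_tmul, NCTensor.tmul_add]
        abel }
  let ψ : Q →+* TrivSqZeroExt Q (NCTensor R Q Q) := TrivSqZeroExt.inlHom Q _
  have hcomp : ψ.comp φ = ω.comp φ := by
    refine RingHom.ext fun r => TrivSqZeroExt.ext rfl ?_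
    show (0 : NCTensor R Q Q) = d (φ r)
    have : NCTensor.tmul R Q Q 1 (φ r) = NCTensor.tmul R Q Q (φ r) 1 := by
      have h1 : φ r = r • (1 : Q) := by rw [hl, mul_one]
      rw [h1, ← NCTensor.smul_tmul, hr, one_mul, ← h1]
    simp [hd, this]
  have := hepi _ ψ ω hcomp
  have h2 := congrArg (fun f : Q →+* TrivSqZeroExt Q (NCTensor R Q Q) => (f q).snd) this
  show _ = _
  have h3 : (0 : NCTensor R Q Q) = d q := h2
  rw [hd] at h3
  exact (sub_eq_zero.mp h3.symm)

end Epi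

/-- If `φ : R → Q` is an injective ring epimorphism with `Tor_1^R(Q, Q) = 0` and
`K = Q/φ(R)`, then `K ⊗_R Q = 0` and `Tor_1^R(K, Q) = 0`. -/
theorem K_tensor_Q_eq_zero {R Q : Type u} [Ring R] [Ring Q] (φ : R →+* Q)
    (hinj : Function.Injective φ) (hepi : IsRingEpi φ)
    [Module Rᵐᵒᵖ Q] (hr : ∀ (r : R) (q : Q), op r • q = q * φ r)
    [Module R Q] (hl : ∀ (r : R) (q : Q), r • q = φ r * q)
    (htor : Tor1Zero R Q Q) :
    Subsingleton (NCTensor R (Kmod φ hr) Q) ∧ Tor1Zero R (Kmod φ hr) Q := by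
  classical
  constructor
  · -- K ⊗ Q = 0
    have star := key_comm φ hr hl hepi
    have hall : ∀ x : NCTensor R (Kmod φ hr) Q, x = 0 := by
      have hid : AddMonoidHom.id (NCTensor R (Kmod φ hr) Q) = 0 := by
        apply NCTensor.hom_ext
        intro k q
        obtain ⟨q', rfl⟩ := Submodule.Quotient.mk_surjective _ k
        have h1 : NCTensor.tmul R Q Q q' q = NCTensor.tmul R Q Q 1 (q' * q) := by
          have h2 := congrArg (rsmulHom φ hl q) (star q')
          simp only [rsmulHom, NCTensor.lift_tmul, one_mul] at h2
          exact h2.symm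
        have h3 : NCTensor.tmul R (Kmod φ hr) Q (Submodule.Quotient.mk q') q
            = NCTensor.map₁ (N := Q) ((phiRange φ hr).mkQ) (NCTensor.tmul R Q Q q' q) := by
          rw [NCTensor.map₁_tmul]; rfl
        have h4 : (phiRange φ hr).mkQ 1 = 0 :=
          (Submodule.Quotient.mk_eq_zero _).2 (show (1 : Q) ∈ Set.range ⇑φ from ⟨1, map_one φ⟩)
        show NCTensor.tmul R (Kmod φ hr) Q (Submodule.Quotient.mk q') q = 0
        rw [h3, h1, NCTensor.map₁_tmul, h4, NCTensor.zero_tmul]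
      intro x
      exact DFunLike.congr_fun hid x
    exact ⟨fun a b => by rw [hall a, hall b]⟩
  · -- Tor₁(K, Q) = 0
    intro A B _ _ _ _ i p hB hi hp hip g hg
    haveI := hB
    set π : Q →ₗ[Rᵐᵒᵖ] Kmod φ hr := (phiRange φ hr).mkQ with hπ
    set Pm : Submodule Rᵐᵒᵖ (B × Q) :=
      LinearMap.ker (p.comp (LinearMap.fst Rᵐᵒᵖ B Q) - π.comp (LinearMap.snd Rᵐᵒᵖ B Q)) with hPm
    have memPm : ∀ v : B × Q, v ∈ Pm ↔ p v.1 = π v.2 := by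
      intro v
      rw [hPm, LinearMap.mem_ker, LinearMap.sub_apply, LinearMap.comp_apply, LinearMap.comp_apply,
        LinearMap.fst_apply, LinearMap.snd_apply, sub_eq_zero]
    have hmem : ∀ a : A, ((LinearMap.inl Rᵐᵒᵖ B Q).comp i) a ∈ Pm := by
      intro a
      have h0 : i a ∈ LinearMap.ker p := hip ▸ LinearMap.mem_range_self i a
      rw [LinearMap.mem_ker] at h0
      rw [memPm]
      show p (i a) = π 0
      rw [h0, map_zero]
    let i' : A →ₗ[Rᵐᵒᵖ] Pm := LinearMap.codRestrict Pm ((LinearMap.inl Rᵐᵒᵖ B Q).comp i) hmem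
    let p' : Pm →ₗ[Rᵐᵒᵖ] Q := (LinearMap.snd Rᵐᵒᵖ B Q).comp Pm.subtype
    let p'' : Pm →ₗ[Rᵐᵒᵖ] B := (LinearMap.fst Rᵐᵒᵖ B Q).comp Pm.subtype
    have hi'val : ∀ a : A, ((i' a : B × Q)) = (i a, 0) := fun a => rfl
    have hi' : Function.Injective i' := by
      intro a b hab
      apply hi
      have := congrArg (fun z : Pm => (z : B × Q).1) hab
      simpa [hi'val] using this
    have hp' : Function.Surjective p' := by
      intro q
      obtain ⟨b, hb⟩ := hp (π q)
      exact ⟨⟨(b, q), (memPm _).2 hb⟩, rfl⟩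
    have hrange : LinearMap.range i' = LinearMap.ker p' := by
      ext x
      rw [LinearMap.mem_range, LinearMap.mem_ker]
      constructor
      · rintro ⟨a, rfl⟩
        show ((i' a : B × Q)).2 = 0
        rw [hi'val]
      · intro hx
        have hx2 : ((x : B × Q)).2 = 0 := hx
        have hm := (memPm _).1 x.2
        rw [hx2, map_zero] at hm
        have : (x : B × Q).1 ∈ LinearMap.range i := by rw [hip, LinearMap.mem_ker]; exact hm
        obtain ⟨a, ha⟩ := this
        refine ⟨a, Subtype.ext (Prod.ext ?_ ?_)⟩
        · rw [hi'val]; exact ha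
        · rw [hi'val]; exact hx2.symm
    have hp''surj : Function.Surjective p'' := by
      intro b
      obtain ⟨q', hq'⟩ := Submodule.Quotient.mk_surjective (phiRange φ hr) (p b)
      exact ⟨⟨(b, q'), (memPm _).2 hq'.symm⟩, rfl⟩
    obtain ⟨s, hs⟩ := Module.projective_lifting_property p'' LinearMap.id hp''surj
    have hsval : ∀ b, ((s b : B × Q)).1 = b := by
      intro b
      have := DFunLike.congr_fun hs b
      exact this
    let w2 : Pm →ₗ[Rᵐᵒᵖ] Q := p'.comp (LinearMap.id - s.comp p'')
    have hw2val : ∀ x : Pm, w2 x = ((x : B × Q)).2 - ((s (p'' x) : B × Q)).2 := by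
      intro x; rfl
    have hw2 : ∀ x : Pm, ∃ r : R, φ r = w2 x := by
      intro x
      set y : Pm := x - s (p'' x) with hy
      have h1 : ((y : B × Q)).1 = 0 := by
        have : (y : B × Q).1 = (x : B × Q).1 - ((s (p'' x) : B × Q)).1 := rfl
        rw [this, hsval]
        exact sub_self _
      have hm := (memPm _).1 y.2
      rw [h1, map_zero] at hm
      have h2 : (y : B × Q).2 ∈ phiRange φ hr := (Submodule.Quotient.mk_eq_zero _).1 hm.symm
      have h2' : (y : B × Q).2 ∈ Set.range ⇑φ := h2
      obtain ⟨r, hr'⟩ := h2' 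
      refine ⟨r, ?_⟩
      rw [hw2val]
      exact hr'
    let tfun : Pm → R := fun x => (hw2 x).choose
    have htfun : ∀ x, φ (tfun x) = w2 x := fun x => (hw2 x).choose_spec
    let tmap : Pm →ₗ[Rᵐᵒᵖ] Rᵐᵒᵖ :=
      { toFun := fun x => op (tfun x)
        map_add' := fun x y => by
          have h : tfun (x + y) = tfun x + tfun y :=
            hinj (by simp only [map_add, htfun])
          show op (tfun (x + y)) = op (tfun x) + op (tfun y)
          rw [h, op_add]
        map_smul' := fun c x => by
          have h : tfun (c • x) = tfun x * c.unop := hinj (by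
            rw [htfun, map_smul, map_mul, htfun]
            conv_lhs => rw [← op_unop c, hr])
          show op (tfun (c • x)) = c • op (tfun x)
          rw [h, op_mul, op_unop, smul_eq_mul] }
    have htmap : ∀ x : Pm, tmap x = op (tfun x) := fun x => rfl
    let φop : Rᵐᵒᵖ →ₗ[Rᵐᵒᵖ] Q :=
      { toFun := fun c => φ c.unop
        map_add' := fun c c' => by
          show φ (c + c').unop = φ c.unop + φ c'.unop
          rw [unop_add, map_add]
        map_smul' := fun c' c => by
          show φ ((c' * c).unop) = c' • φ c.unop
          rw [unop_mul, map_mul]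
          conv_rhs => rw [← op_unop c', hr] }
    have hmem0 : ∀ c : Rᵐᵒᵖ, ((LinearMap.inr Rᵐᵒᵖ B Q).comp φop) c ∈ Pm := by
      intro c
      rw [memPm]
      show p 0 = π (φ c.unop)
      rw [map_zero]
      have hmr : φ c.unop ∈ Set.range ⇑φ := ⟨c.unop, rfl⟩
      exact ((Submodule.Quotient.mk_eq_zero _).2 hmr).symm
    let vker : Rᵐᵒᵖ →ₗ[Rᵐᵒᵖ] Pm := LinearMap.codRestrict Pm ((LinearMap.inr Rᵐᵒᵖ B Q).comp φop) hmem0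
    have hvkerval : ∀ c : Rᵐᵒᵖ, ((vker c : B × Q)) = (0, φ c.unop) := fun c => rfl
    have hvu : ∀ x : Pm, vker (tmap x) + s (p'' x) = x := by
      intro x
      apply Subtype.ext
      apply Prod.ext
      · show (0 : B) + ((s (p'' x) : B × Q)).1 = (x : B × Q).1
        rw [zero_add, hsval]
        rfl
      · show φ (tfun x) + ((s (p'' x) : B × Q)).2 = (x : B × Q).2
        rw [htfun, hw2val, sub_add_cancel]
    haveI : Module.Projective Rᵐᵒᵖ Pm := by
      refine Module.Projective.of_split (M := Rᵐᵒᵖ × B) (LinearMap.prod tmap p'')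
        (vker.comp (LinearMap.fst Rᵐᵒᵖ Rᵐᵒᵖ B) + s.comp (LinearMap.snd Rᵐᵒᵖ Rᵐᵒᵖ B)) ?_
      apply LinearMap.ext
      intro x
      show vker (tmap x) + s (p'' x) = x
      exact hvu x
    -- tensored maps
    let h : NCTensor R A Q →+ NCTensor R Pm Q := NCTensor.map₁ i'
    have hinjh : Function.Injective h :=
      htor A Pm i' p' inferInstance hi' hp' hrange h (fun a n => NCTensor.map₁_tmul _ _ _)
    let ρ : NCTensor R Pm Q →+ NCTensor R B Q := NCTensor.map₁ p''
    let σ : NCTensor R Pm Q →+ NCTensor R Q Q := NCTensor.map₁ p'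
    let sbar : NCTensor R B Q →+ NCTensor R Pm Q := NCTensor.map₁ s
    let wlin : Pm →ₗ[Rᵐᵒᵖ] Pm := vker.comp tmap
    have hρh : ρ.comp h = g := by
      apply NCTensor.hom_ext
      intro a n
      show ρ (h (NCTensor.tmul R A Q a n)) = _
      rw [hg]
      show NCTensor.map₁ p'' (NCTensor.map₁ i' (NCTensor.tmul R A Q a n)) = _
      rw [NCTensor.map₁_tmul, NCTensor.map₁_tmul]
      have : p'' (i' a) = i a := rfl
      rw [this]
    have hσh : σ.comp h = 0 := by
      apply NCTensor.hom_ext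
      intro a n
      show NCTensor.map₁ p' (NCTensor.map₁ i' (NCTensor.tmul R A Q a n)) = 0
      rw [NCTensor.map₁_tmul, NCTensor.map₁_tmul]
      have : p' (i' a) = 0 := rfl
      rw [this, NCTensor.zero_tmul]
    have hdecomp : AddMonoidHom.id (NCTensor R Pm Q) = sbar.comp ρ + NCTensor.map₁ wlin := by
      apply NCTensor.hom_ext
      intro m n
      show NCTensor.tmul R Pm Q m n = sbar (ρ (NCTensor.tmul R Pm Q m n))
        + NCTensor.map₁ wlin (NCTensor.tmul R Pm Q m n)
      show NCTensor.tmul R Pm Q m n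
        = NCTensor.map₁ s (NCTensor.map₁ p'' (NCTensor.tmul R Pm Q m n))
          + NCTensor.map₁ wlin (NCTensor.tmul R Pm Q m n)
      rw [NCTensor.map₁_tmul, NCTensor.map₁_tmul, NCTensor.map₁_tmul, ← NCTensor.add_tmul]
      have : s (p'' m) + wlin m = m := by
        have h1 : wlin m = vker (tmap m) := rfl
        rw [h1, add_comm]
        exact hvu m
      rw [this]
    -- injectivity of map₁ φop
    let μ : NCTensor R Q Q →+ Q := NCTensor.lift (fun x y => x * y)
      (fun m m' n => add_mul m m' n) (fun m n n' => mul_add m n n')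
      (fun r m n => by
        show (op r • m) * n = m * (r • n)
        rw [hr, mul_assoc, ← hl r n])
    let ε : NCTensor R Rᵐᵒᵖ Q →+ Q := NCTensor.lift (fun c q => φ c.unop * q)
      (fun m m' n => by
        show φ (m + m').unop * n = φ m.unop * n + φ m'.unop * n
        rw [unop_add, map_add, add_mul])
      (fun m n n' => by show φ m.unop * (n + n') = _; rw [mul_add])
      (fun r m n => by
        show φ ((op r • m)).unop * n = φ m.unop * (r • n)
        rw [smul_eq_mul, unop_mul, unop_op, map_mul, mul_assoc, ← hl r n])
    let δ : Q →+ NCTensor R Rᵐᵒᵖ Q := AddMonoidHom.mk' (fun q => NCTensor.tmul R Rᵐᵒᵖ Q (op 1) q)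
      (fun a b => NCTensor.tmul_add _ _ _)
    have hδε : δ.comp ε = AddMonoidHom.id _ := by
      apply NCTensor.hom_ext
      intro c q
      rw [AddMonoidHom.comp_apply, AddMonoidHom.id_apply,
        show ε (NCTensor.tmul R Rᵐᵒᵖ Q c q) = φ c.unop * q from NCTensor.lift_tmul _ _ _ _ _ _]
      show NCTensor.tmul R Rᵐᵒᵖ Q (op 1) (φ c.unop * q) = NCTensor.tmul R Rᵐᵒᵖ Q c q
      rw [← hl c.unop q, ← NCTensor.smul_tmul]
      congr 1
      rw [smul_eq_mul, ← op_mul, one_mul, op_unop]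
    have hεinj : Function.Injective ε := by
      intro a b hab
      have ha := DFunLike.congr_fun hδε a
      have hb := DFunLike.congr_fun hδε b
      rw [AddMonoidHom.comp_apply, AddMonoidHom.id_apply] at ha hb
      rw [← ha, ← hb, hab]
    have hμφ : μ.comp (NCTensor.map₁ (N := Q) φop) = ε := by
      apply NCTensor.hom_ext
      intro c q
      rw [AddMonoidHom.comp_apply, NCTensor.map₁_tmul,
        show μ (NCTensor.tmul R Q Q (φop c) q) = φop c * q from NCTensor.lift_tmul _ _ _ _ _ _,
        show ε (NCTensor.tmul R Rᵐᵒᵖ Q c q) = φ c.unop * q from NCTensor.lift_tmul _ _ _ _ _ _]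
      rfl
    have hφbarinj : Function.Injective (NCTensor.map₁ (N := Q) φop) := by
      intro a b hab
      apply hεinj
      rw [← hμφ, AddMonoidHom.comp_apply, AddMonoidHom.comp_apply, hab]
    have hcompwσ : σ.comp (NCTensor.map₁ (N := Q) wlin)
        = (NCTensor.map₁ (N := Q) φop).comp (NCTensor.map₁ (N := Q) tmap) := by
      apply NCTensor.hom_ext
      intro m n
      show NCTensor.map₁ p' (NCTensor.map₁ wlin (NCTensor.tmul R Pm Q m n))
        = NCTensor.map₁ φop (NCTensor.map₁ tmap (NCTensor.tmul R Pm Q m n))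
      rw [NCTensor.map₁_tmul, NCTensor.map₁_tmul, NCTensor.map₁_tmul, NCTensor.map₁_tmul]
      have : p' (wlin m) = φop (tmap m) := rfl
      rw [this]
    have hwdecomp2 : NCTensor.map₁ (N := Q) wlin
        = (NCTensor.map₁ (N := Q) vker).comp (NCTensor.map₁ (N := Q) tmap) := by
      apply NCTensor.hom_ext
      intro m n
      show NCTensor.tmul R Pm Q (wlin m) n = _
      rw [AddMonoidHom.comp_apply, NCTensor.map₁_tmul, NCTensor.map₁_tmul]
      rfl
    -- final chase
    rw [injective_iff_map_eq_zero]
    intro x hx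
    have hhx : σ (h x) = 0 := by
      rw [← AddMonoidHom.comp_apply, hσh, AddMonoidHom.zero_apply]
    have e1 : h x = NCTensor.map₁ wlin (h x) := by
      have hd := DFunLike.congr_fun hdecomp (h x)
      rw [AddMonoidHom.id_apply, AddMonoidHom.add_apply, AddMonoidHom.comp_apply] at hd
      have hgx : ρ (h x) = 0 := by
        rw [← AddMonoidHom.comp_apply, hρh]; exact hx
      rw [hgx, map_zero, zero_add] at hd
      exact hd
    have e2 : NCTensor.map₁ φop (NCTensor.map₁ tmap (h x)) = 0 := by
      have hc := DFunLike.congr_fun hcompwσ (h x)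
      rw [AddMonoidHom.comp_apply, AddMonoidHom.comp_apply] at hc
      rw [← hc, ← e1, hhx]
    have e3 : NCTensor.map₁ (N := Q) tmap (h x) = 0 := hφbarinj (by rw [e2, map_zero])
    have e4 : h x = 0 := by
      rw [e1, hwdecomp2, AddMonoidHom.comp_apply, e3, map_zero]
    exact hinjh (by rw [e4, map_zero])
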